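/- Let p > 1/2, k ≥ 1 an integer, τ > 0, and λ_j = j^{-2p} for j = 1,…,m. With Q_k(λ) = λ^{-1}(1−(1−τλ)^k) the Landweber filter, if m ≥ m' := ⌈(τk)^{1/(2p)}⌉ then Σ_{j=1}^m Q_k(λ_j)² λ_j ≤ ((m')^{2p+1})/(2p+1) · C₁ + (τk)² (m')^{1−2p}/(2p−1) · C₂ for explicit constants, and in particular Σ_{j=1}^m Q_k(λ_j)² λ_j ≤ C (τk)^{(2p+1)/(2p)} for a constant C depending only on p. -/

import Mathlib

open Real Finset

/-- Per term bound: term ≤ min (j^{2p}) ((τk)² j^{-2p}). -/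
lemma landweber_term_bound (p τ : ℝ) (hp : 1 / 2 < p) (k j : ℕ) (hk : 1 ≤ k)
    (hτ : 0 < τ) (hτ1 : τ ≤ 1) (hj : 1 ≤ j) :
    (((j : ℝ) ^ (-(2 * p)))⁻¹ * (1 - (1 - τ * (j : ℝ) ^ (-(2 * p))) ^ k)) ^ 2
        * (j : ℝ) ^ (-(2 * p))
      ≤ min ((j : ℝ) ^ (2 * p)) ((τ * k) ^ 2 * (j : ℝ) ^ (-(2 * p))) := by
  have hjR : (1 : ℝ) ≤ j := by exact_mod_cast hj
  set l : ℝ := (j : ℝ) ^ (-(2 * p)) with hl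
  have hl0 : 0 < l := Real.rpow_pos_of_pos (by linarith) _
  have hl1 : l ≤ 1 := Real.rpow_le_one_of_one_le_of_nonpos hjR (by linarith)
  have htl : τ * l ≤ 1 := by nlinarith
  have h0 : 0 ≤ 1 - τ * l := by linarith
  have hτl0 : 0 < τ * l := by positivity
  set B : ℝ := 1 - (1 - τ * l) ^ k with hB
  have hB0 : 0 ≤ B := by
    have : (1 - τ * l) ^ k ≤ 1 := pow_le_one₀ h0 (by linarith)
    simp only [hB]; linarith
  have hB1 : B ≤ 1 := by
    have := pow_nonneg h0 k
    simp only [hB]; linarith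
  have hBk : B ≤ (k : ℝ) * (τ * l) := by
    have h := one_add_mul_le_pow (a := -(τ * l)) (by nlinarith) k
    have h' : 1 - (k : ℝ) * (τ * l) ≤ (1 - τ * l) ^ k := by
      have e1 : (1 : ℝ) + -(τ * l) = 1 - τ * l := by ring
      have e2 : (1 : ℝ) + (k : ℝ) * -(τ * l) = 1 - (k : ℝ) * (τ * l) := by ring
      rw [e1, e2] at h; exact h
    simp only [hB]; linarith
  have key : (l⁻¹ * B) ^ 2 * l = B ^ 2 * l⁻¹ := by
    field_simp
  rw [key, le_min_iff]
  constructor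
  · have hinv : l⁻¹ = (j : ℝ) ^ (2 * p) := by
      rw [hl, Real.rpow_neg (by linarith), inv_inv]
    rw [← hinv]
    have h1 : B ^ 2 ≤ 1 := by nlinarith
    calc B ^ 2 * l⁻¹ ≤ 1 * l⁻¹ := mul_le_mul_of_nonneg_right h1 (inv_nonneg.mpr hl0.le)
      _ = l⁻¹ := one_mul _
  · have h2 : B ^ 2 ≤ (τ * k) ^ 2 * l ^ 2 := by nlinarith
    calc B ^ 2 * l⁻¹ ≤ ((τ * k) ^ 2 * l ^ 2) * l⁻¹ :=
          mul_le_mul_of_nonneg_right h2 (inv_nonneg.mpr hl0.le)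
      _ = (τ * k) ^ 2 * l := by field_simp

/-- Head: ∑_{j=1}^n j^{2p} ≤ n · n^{2p}. -/
lemma landweber_head (p : ℝ) (hp : 0 ≤ p) (n : ℕ) :
    ∑ j ∈ Finset.Icc 1 n, (j : ℝ) ^ (2 * p) ≤ (n : ℝ) * (n : ℝ) ^ (2 * p) := by
  calc ∑ j ∈ Finset.Icc 1 n, (j : ℝ) ^ (2 * p)
      ≤ ∑ _j ∈ Finset.Icc 1 n, (n : ℝ) ^ (2 * p) := by
        refine Finset.sum_le_sum fun j hj => ?_
        have hjn : (j : ℝ) ≤ n := by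
          exact_mod_cast (Finset.mem_Icc.mp hj).2
        exact Real.rpow_le_rpow (by positivity) hjn (by linarith)
    _ = (n : ℝ) * (n : ℝ) ^ (2 * p) := by
        rw [Finset.sum_const, Nat.card_Icc]
        simp [nsmul_eq_mul]
/-- Tail: ∑_{j=n+1}^m j^{-2p} ≤ n^{1-2p}/(2p-1). -/
lemma landweber_tail (p : ℝ) (hp : 1 / 2 < p) (n m : ℕ) (hn : 1 ≤ n) :
    ∑ j ∈ Finset.Ioc n m, (j : ℝ) ^ (-(2 * p)) ≤ (n : ℝ) ^ (1 - 2 * p) / (2 * p - 1) := by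
  have hnR : (1 : ℝ) ≤ n := by exact_mod_cast hn
  have hden : 0 < 2 * p - 1 := by linarith
  rcases le_or_gt m n with h | h
  · rw [Finset.Ioc_eq_empty (by omega)]
    simp only [Finset.sum_empty]
    positivity
  · have hnm : n ≤ m := h.le
    have hf : AntitoneOn (fun x : ℝ => x ^ (-(2 * p))) (Set.Icc (n : ℝ) m) := by
      intro x hx y hy hxy
      exact Real.rpow_le_rpow_of_nonpos (lt_of_lt_of_le (by linarith) hx.1) hxy (by linarith)
    have hint := hf.sum_le_integral_Ico hnm
    have hsum : ∑ i ∈ Finset.Ico n m, ((i + 1 : ℕ) : ℝ) ^ (-(2 * p))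
        = ∑ j ∈ Finset.Ioc n m, (j : ℝ) ^ (-(2 * p)) := by
      rw [← Finset.Ico_add_one_add_one_eq_Ioc]
      exact Finset.sum_Ico_add' (fun j : ℕ => (j : ℝ) ^ (-(2 * p))) n m 1
    have hI : (∫ x in (n : ℝ)..(m : ℝ), x ^ (-(2 * p)))
        = ((m : ℝ) ^ (-(2 * p) + 1) - (n : ℝ) ^ (-(2 * p) + 1)) / (-(2 * p) + 1) := by
      apply integral_rpow
      right
      constructor
      · intro hcon; linarith
      · rw [Set.uIcc_of_le (by exact_mod_cast hnm)]
        intro hcon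
        have := hcon.1
        linarith
    rw [hsum, hI] at hint
    have hm0 : (0 : ℝ) ≤ (m : ℝ) ^ (-(2 * p) + 1) := Real.rpow_nonneg (by positivity) _
    have heq : (-(2 * p) + 1) = -(2 * p - 1) := by ring
    calc ∑ j ∈ Finset.Ioc n m, (j : ℝ) ^ (-(2 * p))
        ≤ ((m : ℝ) ^ (-(2 * p) + 1) - (n : ℝ) ^ (-(2 * p) + 1)) / (-(2 * p) + 1) := hint
      _ ≤ (n : ℝ) ^ (1 - 2 * p) / (2 * p - 1) := by
          have h1 : (1 - 2 * p) = -(2 * p) + 1 := by ring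
          have h2 : ((m : ℝ) ^ (-(2 * p) + 1) - (n : ℝ) ^ (-(2 * p) + 1)) / (-(2 * p) + 1)
              = ((n : ℝ) ^ (-(2 * p) + 1) - (m : ℝ) ^ (-(2 * p) + 1)) / (2 * p - 1) := by
            rw [show (-(2 * p) + 1) = -(2 * p - 1) from by ring, div_neg]; ring
          rw [h1]
          rw [h2]
          gcongr
          linarith

theorem landweber_variance_trace_bound (p : ℝ) (hp : 1 / 2 < p) :
    ∃ C : ℝ, 0 < C ∧ ∀ (k : ℕ), 1 ≤ k → ∀ τ : ℝ, 0 < τ → τ ≤ 1 →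
      ∀ m : ℕ, (⌈(τ * k) ^ (1 / (2 * p))⌉₊ ≤ m) →
        ∑ j ∈ Finset.Icc 1 m,
            (((j : ℝ) ^ (-(2 * p)))⁻¹ * (1 - (1 - τ * (j : ℝ) ^ (-(2 * p))) ^ k)) ^ 2
              * (j : ℝ) ^ (-(2 * p))
          ≤ C * (τ * k) ^ ((2 * p + 1) / (2 * p)) := by
  have hden : (0 : ℝ) < 2 * p - 1 := by linarith
  refine ⟨2 ^ (2 * p + 1) + 2 / (2 * p - 1) + 1, by positivity, ?_⟩
  intro k hk τ hτ hτ1 m hm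
  set C : ℝ := 2 ^ (2 * p + 1) + 2 / (2 * p - 1) + 1 with hC_def
  set a : ℝ := τ * k with ha_def
  have hkR : (1 : ℝ) ≤ k := by exact_mod_cast hk
  have ha : 0 < a := by rw [ha_def]; positivity
  set e : ℝ := (2 * p + 1) / (2 * p) with he_def
  set n : ℕ := ⌈a ^ (1 / (2 * p))⌉₊ with hn_def
  have hu0 : 0 < a ^ (1 / (2 * p)) := Real.rpow_pos_of_pos ha _
  have hn1 : 1 ≤ n := Nat.ceil_pos.mpr hu0
  have hnm : n ≤ m := hm
  set T : ℕ → ℝ := fun j =>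
    (((j : ℝ) ^ (-(2 * p)))⁻¹ * (1 - (1 - τ * (j : ℝ) ^ (-(2 * p))) ^ k)) ^ 2
      * (j : ℝ) ^ (-(2 * p)) with hT_def
  have hsplit : ∑ j ∈ Finset.Icc 1 m, T j
      = ∑ j ∈ Finset.Icc 1 n, T j + ∑ j ∈ Finset.Ioc n m, T j :=
    (Finset.sum_Ioc_consecutive T (Nat.zero_le n) hnm).symm
  have hae : 0 < a ^ e := Real.rpow_pos_of_pos ha _
  have htwo : (0 : ℝ) < 2 ^ (2 * p + 1) := by positivity
  -- tail bound
  have hS2 : ∑ j ∈ Finset.Ioc n m, T j ≤ a ^ 2 * ((n : ℝ) ^ (1 - 2 * p) / (2 * p - 1)) := by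
    calc ∑ j ∈ Finset.Ioc n m, T j
        ≤ ∑ j ∈ Finset.Ioc n m, a ^ 2 * (j : ℝ) ^ (-(2 * p)) := by
          refine Finset.sum_le_sum fun j hj => ?_
          have hj1 : 1 ≤ j := le_trans hn1 (Finset.mem_Ioc.mp hj).1.le
          exact le_trans (landweber_term_bound p τ hp k j hk hτ hτ1 hj1) (min_le_right _ _)
      _ = a ^ 2 * ∑ j ∈ Finset.Ioc n m, (j : ℝ) ^ (-(2 * p)) := by rw [Finset.mul_sum]
      _ ≤ a ^ 2 * ((n : ℝ) ^ (1 - 2 * p) / (2 * p - 1)) := by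
          exact mul_le_mul_of_nonneg_left (landweber_tail p hp n m hn1) (sq_nonneg a)
  have ha2 : a ^ 2 = a ^ (2 : ℝ) := by
    rw [← Real.rpow_natCast a 2]; norm_num
  clear_value C e
  rcases le_or_gt 1 a with ha1 | ha1
  · -- case 1 ≤ a
    set u : ℝ := a ^ (1 / (2 * p)) with hu_def
    have hu1 : 1 ≤ u := Real.one_le_rpow ha1 (by positivity)
    have hun : u ≤ n := Nat.le_ceil _
    have hnu : (n : ℝ) ≤ 2 * u := by
      have := Nat.ceil_lt_add_one hu0.le
      rw [← hn_def] at this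
      linarith
    have hS1 : ∑ j ∈ Finset.Icc 1 n, T j ≤ (n : ℝ) * (n : ℝ) ^ (2 * p) := by
      calc ∑ j ∈ Finset.Icc 1 n, T j
          ≤ ∑ j ∈ Finset.Icc 1 n, (j : ℝ) ^ (2 * p) := by
            refine Finset.sum_le_sum fun j hj => ?_
            exact le_trans
              (landweber_term_bound p τ hp k j hk hτ hτ1 (Finset.mem_Icc.mp hj).1)
              (min_le_left _ _)
        _ ≤ (n : ℝ) * (n : ℝ) ^ (2 * p) := landweber_head p (by linarith) n
    have hhead : (n : ℝ) * (n : ℝ) ^ (2 * p) ≤ 2 ^ (2 * p + 1) * a ^ e := by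
      have h1 : (n : ℝ) * (n : ℝ) ^ (2 * p) ≤ (2 * u) * (2 * u) ^ (2 * p) :=
        mul_le_mul hnu (Real.rpow_le_rpow (by positivity) hnu (by linarith))
          (Real.rpow_nonneg (by positivity) _) (by positivity)
      have h2 : (2 * u) * (2 * u) ^ (2 * p) = (2 * u) ^ (2 * p + 1) := by
        rw [Real.rpow_add (by positivity), Real.rpow_one]; ring
      have h3 : (2 * u) ^ (2 * p + 1) = 2 ^ (2 * p + 1) * u ^ (2 * p + 1) :=
        Real.mul_rpow (by norm_num) (by positivity)
      have h4 : u ^ (2 * p + 1) = a ^ e := by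
        rw [hu_def, ← Real.rpow_mul ha.le]
        congr 1
        rw [he_def]
        field_simp
      calc (n : ℝ) * (n : ℝ) ^ (2 * p) ≤ (2 * u) * (2 * u) ^ (2 * p) := h1
        _ = 2 ^ (2 * p + 1) * a ^ e := by rw [h2, h3, h4]
    have htail : a ^ 2 * ((n : ℝ) ^ (1 - 2 * p) / (2 * p - 1)) ≤ a ^ e / (2 * p - 1) := by
      have h1 : (n : ℝ) ^ (1 - 2 * p) ≤ u ^ (1 - 2 * p) :=
        Real.rpow_le_rpow_of_nonpos hu0 hun (by linarith)
      have h2 : a ^ 2 * u ^ (1 - 2 * p) = a ^ e := by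
        rw [ha2, hu_def, ← Real.rpow_mul ha.le, ← Real.rpow_add ha]
        congr 1
        rw [he_def]
        field_simp
        ring
      calc a ^ 2 * ((n : ℝ) ^ (1 - 2 * p) / (2 * p - 1))
          ≤ a ^ 2 * (u ^ (1 - 2 * p) / (2 * p - 1)) := by
            apply mul_le_mul_of_nonneg_left _ (sq_nonneg a)
            gcongr
        _ = a ^ e / (2 * p - 1) := by rw [mul_div_assoc'] at *; rw [h2]
    rw [hsplit]
    have hCa : C * a ^ e = 2 ^ (2 * p + 1) * a ^ e + (2 / (2 * p - 1)) * a ^ e + a ^ e := by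
      rw [hC_def]; ring
    have hsc : (1 : ℝ) / (2 * p - 1) ≤ 2 / (2 * p - 1) + 1 := by
      have h6 : (1 : ℝ) / (2 * p - 1) ≤ 2 / (2 * p - 1) := by gcongr <;> norm_num
      linarith
    have h7 : (1 / (2 * p - 1)) * a ^ e ≤ (2 / (2 * p - 1) + 1) * a ^ e :=
      mul_le_mul_of_nonneg_right hsc hae.le
    have h5 : a ^ e / (2 * p - 1) = (1 / (2 * p - 1)) * a ^ e := by ring
    have h7' : (2 / (2 * p - 1) + 1) * a ^ e = (2 / (2 * p - 1)) * a ^ e + a ^ e := by ring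
    linarith [hS1, hS2, hhead, htail]
  · -- case a < 1
    have hu1 : a ^ (1 / (2 * p)) ≤ 1 := Real.rpow_le_one ha.le ha1.le (by positivity)
    have hn_eq : n = 1 :=
      le_antisymm (by rw [hn_def]; exact Nat.ceil_le.mpr (by simpa using hu1)) hn1
    have hS1 : ∑ j ∈ Finset.Icc 1 n, T j ≤ a ^ 2 := by
      rw [hn_eq, Finset.Icc_self, Finset.sum_singleton]
      have h1 : T 1 ≤ a ^ 2 * (1 : ℝ) ^ (-(2 * p)) :=
        le_trans (landweber_term_bound p τ hp k 1 hk hτ hτ1 le_rfl)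
          (by rw [Nat.cast_one]; exact min_le_right _ _)
      simpa [Real.one_rpow] using h1
    have hS2' : ∑ j ∈ Finset.Ioc n m, T j ≤ a ^ 2 * (1 / (2 * p - 1)) := by
      refine le_trans hS2 (mul_le_mul_of_nonneg_left ?_ (sq_nonneg a))
      gcongr
      exact Real.rpow_le_one_of_one_le_of_nonpos (by exact_mod_cast hn1) (by linarith)
    have hee : a ^ 2 ≤ a ^ e := by
      rw [ha2]
      apply Real.rpow_le_rpow_of_exponent_ge ha ha1.le
      rw [he_def, div_le_iff₀ (by linarith)]
      linarith
    rw [hsplit]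
    have hCa : C * a ^ e = 2 ^ (2 * p + 1) * a ^ e + (2 / (2 * p - 1)) * a ^ e + a ^ e := by
      rw [hC_def]; ring
    have h8 : a ^ 2 * (1 / (2 * p - 1)) ≤ a ^ e * (1 / (2 * p - 1)) :=
      mul_le_mul_of_nonneg_right hee (by positivity)
    have h9 : a ^ e * (1 / (2 * p - 1)) ≤ (2 / (2 * p - 1)) * a ^ e := by
      rw [mul_comm]
      refine mul_le_mul_of_nonneg_right ?_ hae.le
      gcongr <;> norm_num
    have h10 : 0 ≤ 2 ^ (2 * p + 1) * a ^ e := (mul_pos htwo hae).le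
    linarith [hS1, hS2', hee]
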